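/- Let n ∈ ℕ with n ≥ 3 and let {D_{î}}_{i ∈ [n]} be a family of positive real numbers such that for every i ∈ [n] one has (n−2)·D_{î} ≤ Σ_{j ∈ [n]∖{i}} D_{ĵ}, and at most one of these n inequalities is an equality. Then there exists a positive-weighted tree 𝒯=(T,w) with at least n vertices, containing distinct vertices 1,…,n, such that D_{[n]∖{i}}(𝒯) = D_{î} for every i ∈ [n]. -/

import Mathlib

open SimpleGraph Finset

/-- The total weight of a subgraph: the sum of the weights of its edges. -/
noncomputable def subgraphWeight {V : Type} [Fintype V] {G : SimpleGraph V}
    (w : Sym2 V → ℝ) (R : G.Subgraph) : ℝ :=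
  ∑ e ∈ (Set.toFinite R.edgeSet).toFinset, w e

/-- `graphDist G w I` is the minimum of `subgraphWeight w R` over connected
subgraphs `R` of `G` whose vertex set contains `I`. -/
noncomputable def graphDist {V : Type} [Fintype V] (G : SimpleGraph V)
    (w : Sym2 V → ℝ) (I : Set V) : ℝ :=
  sInf { x : ℝ | ∃ R : G.Subgraph, R.Connected ∧ I ⊆ R.verts ∧ subgraphWeight w R = x }

/-- A weight function is positive on a graph if every edge has positive weight. -/
def PosWeighted {V : Type} (G : SimpleGraph V) (w : Sym2 V → ℝ) : Prop :=
  ∀ e ∈ G.edgeSet, 0 < w e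


section StarAux

variable {V : Type} [DecidableEq V]

/-- Star graph with center `c`. -/
@[reducible] def starG (c : V) : SimpleGraph V where
  Adj a b := a ≠ b ∧ (a = c ∨ b = c)
  symm := ⟨fun _ _ ⟨h1, h2⟩ => ⟨h1.symm, h2.symm⟩⟩
  loopless := ⟨fun _ h => h.1 rfl⟩

/-- Weight on edges: sum of a vertex function over the endpoints. -/
noncomputable def starW (f : V → ℝ) : Sym2 V → ℝ :=
  Sym2.lift ⟨fun a b => f a + f b, fun a b => by ring⟩

@[simp] lemma starW_mk (f : V → ℝ) (a b : V) : starW f s(a, b) = f a + f b := rfl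

omit [DecidableEq V] in
lemma starW_nonneg (f : V → ℝ) (hf : ∀ v, 0 ≤ f v) (e : Sym2 V) : 0 ≤ starW f e := by
  induction e using Sym2.ind with
  | _ a b => simpa using add_nonneg (hf a) (hf b)

omit [DecidableEq V] in
lemma starG_connected (c : V) : (starG c).Connected := by
  rw [connected_iff]
  refine ⟨fun a b => ?_, ⟨c⟩⟩
  have key : ∀ x : V, (starG c).Reachable x c := by
    intro x
    rcases eq_or_ne x c with rfl | hx
    · rfl
    · exact Adj.reachable ⟨hx, Or.inr rfl⟩
  exact (key a).trans (key b).symm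

omit [DecidableEq V] in
lemma starG_del_isolated {c u : V} (hu : u ≠ c) (b : V) :
    ¬ ((starG c) \ fromEdgeSet {s(c, u)}).Adj u b := by
  rintro ⟨⟨hne, h2⟩, hne2⟩
  rcases h2 with rfl | rfl
  · exact hu rfl
  · rw [fromEdgeSet_adj] at hne2
    exact hne2 ⟨by rw [Sym2.eq_swap]; exact rfl, hne⟩

lemma exists_adj_of_reachable' {W : Type*} {G : SimpleGraph W} {u v : W}
    (h : G.Reachable u v) (hne : u ≠ v) : ∃ x, G.Adj u x := by
  obtain ⟨p⟩ := h
  cases p with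
  | nil => exact absurd rfl hne
  | cons h p => exact ⟨_, h⟩

omit [DecidableEq V] in
lemma starG_del_unreachable {c u x : V} (hu : u ≠ c) (hux : u ≠ x) :
    ¬ ((starG c) \ fromEdgeSet {s(c, u)}).Reachable u x := by
  intro hr
  obtain ⟨b, hb⟩ := exists_adj_of_reachable' hr hux
  exact starG_del_isolated hu _ hb

omit [DecidableEq V] in
lemma starG_acyclic (c : V) : (starG c).IsAcyclic := by
  rw [isAcyclic_iff_forall_adj_isBridge]
  intro v w hvw
  rw [isBridge_iff]
  refine fun hr => ?_
  rcases hvw.2 with rfl | rfl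
  · have hw : w ≠ v := fun h => hvw.1 h.symm
    exact starG_del_unreachable hw hw (by rw [Sym2.eq_swap] at hr ⊢; exact hr.symm)
  · exact starG_del_unreachable hvw.1 hvw.1 (by rw [Sym2.eq_swap] at hr; exact hr)

omit [DecidableEq V] in
lemma starG_isTree (c : V) : (starG c).IsTree := ⟨starG_connected c, starG_acyclic c⟩

/-- The witness subgraph: star from `c` to the elements of `J` other than `c`. -/
def starSub (c : V) (J : Finset V) : (starG c).Subgraph where
  verts := insert c ↑J
  Adj a b := (a = c ∧ b ∈ J.erase c) ∨ (b = c ∧ a ∈ J.erase c)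
  adj_sub := by
    rintro a b (⟨rfl, hb⟩ | ⟨rfl, ha⟩)
    · exact ⟨fun h => (Finset.mem_erase.mp hb).1 h.symm, Or.inl rfl⟩
    · exact ⟨(Finset.mem_erase.mp ha).1, Or.inr rfl⟩
  edge_vert := by
    rintro a b (⟨rfl, hb⟩ | ⟨rfl, ha⟩)
    · exact Set.mem_insert _ _
    · exact Set.mem_insert_of_mem _ (Finset.mem_coe.mpr (Finset.mem_of_mem_erase ha))
  symm := by
    refine ⟨?_⟩
    rintro a b (h | h)
    · exact Or.inr h
    · exact Or.inl h

lemma starSub_connected (c : V) (J : Finset V) : (starSub c J).Connected := by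
  rw [SimpleGraph.Subgraph.connected_iff]
  refine ⟨⟨fun a b => ?_⟩, ⟨c, Set.mem_insert _ _⟩⟩
  have key : ∀ x : (starSub c J).verts, (starSub c J).coe.Reachable x ⟨c, Set.mem_insert _ _⟩ := by
    rintro ⟨x, hx⟩
    rcases Set.mem_insert_iff.mp hx with rfl | hx'
    · rfl
    · rcases eq_or_ne x c with rfl | hxc
      · rfl
      · refine Adj.reachable ?_
        rw [SimpleGraph.Subgraph.coe_adj]
        exact Or.inr ⟨rfl, Finset.mem_erase.mpr ⟨hxc, hx'⟩⟩
  exact (key a).trans (key b).symm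

lemma sym2_inj_on_erase (c : V) (J : Finset V) :
    ∀ x ∈ J.erase c, ∀ y ∈ J.erase c, s(c, x) = s(c, y) → x = y := by
  intro x hx y hy h
  rw [Sym2.eq_iff] at h
  rcases h with ⟨-, h⟩ | ⟨h1, h2⟩
  · exact h
  · exact h2.trans h1

variable [Fintype V]

lemma starSub_edgeFinset (c : V) (J : Finset V) :
    (Set.toFinite (starSub c J).edgeSet).toFinset = (J.erase c).image (fun v => s(c, v)) := by
  ext e
  rw [Set.Finite.mem_toFinset]
  induction e using Sym2.ind with
  | _ a b =>
    rw [SimpleGraph.Subgraph.mem_edgeSet, Finset.mem_image]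
    constructor
    · rintro (⟨rfl, hb⟩ | ⟨rfl, ha⟩)
      · exact ⟨b, hb, rfl⟩
      · exact ⟨a, ha, Sym2.eq_swap⟩
    · rintro ⟨v, hv, h⟩
      rw [Sym2.eq_iff] at h
      rcases h with ⟨rfl, rfl⟩ | ⟨rfl, rfl⟩
      · exact Or.inl ⟨rfl, hv⟩
      · exact Or.inr ⟨rfl, hv⟩

lemma starSub_weight (c : V) (f : V → ℝ) (hf0 : f c = 0) (J : Finset V) :
    subgraphWeight (starW f) (starSub c J) = ∑ v ∈ J.erase c, f v := by
  rw [subgraphWeight, starSub_edgeFinset, Finset.sum_image (sym2_inj_on_erase c J)]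
  refine Finset.sum_congr rfl fun v _ => ?_
  rw [starW_mk, hf0, zero_add]

lemma star_graphDist (c : V) (f : V → ℝ) (hf0 : f c = 0) (hf : ∀ v, 0 ≤ f v)
    (J : Finset V) (h2 : c ∈ J ∨ 2 ≤ (J.erase c).card) :
    graphDist (starG c) (starW f) ↑J = ∑ v ∈ J.erase c, f v := by
  apply IsLeast.csInf_eq
  constructor
  · exact ⟨starSub c J, starSub_connected c J,
      fun x hx => Set.mem_insert_of_mem _ hx, starSub_weight c f hf0 J⟩
  · rintro x ⟨R, hRc, hRv, rfl⟩
    rw [SimpleGraph.Subgraph.connected_iff] at hRc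
    have key : ∀ (a : V) (ha : a ∈ R.verts) (t : R.verts), a ≠ c →
        (⟨a, ha⟩ : R.verts) ≠ t → R.Adj a c := by
      intro a ha t hac hnet
      obtain ⟨⟨b, hbR⟩, hb⟩ := exists_adj_of_reachable' (hRc.1.coe ⟨a, ha⟩ t) hnet
      rw [SimpleGraph.Subgraph.coe_adj] at hb
      rcases (R.adj_sub hb).2 with h | h
      · exact absurd h hac
      · have hb' : R.Adj a b := hb
        have h' : b = c := h
        rwa [h'] at hb'
    have hcR : c ∈ R.verts := by
      rcases h2 with hcJ | hcard
      · exact hRv hcJ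
      · obtain ⟨v1, hv1, v2, hv2, hne⟩ := Finset.one_lt_card.mp hcard
        have hv1' : v1 ∈ R.verts := hRv (Finset.mem_of_mem_erase hv1)
        have hv2' : v2 ∈ R.verts := hRv (Finset.mem_of_mem_erase hv2)
        exact (key v1 hv1' ⟨v2, hv2'⟩ (Finset.mem_erase.mp hv1).1
          (fun h => hne (congrArg Subtype.val h))).snd_mem
    have hadjall : ∀ v ∈ J.erase c, R.Adj c v := by
      intro v hv
      have hvR : v ∈ R.verts := hRv (Finset.mem_of_mem_erase hv)
      exact (key v hvR ⟨c, hcR⟩ (Finset.mem_erase.mp hv).1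
        (fun h => (Finset.mem_erase.mp hv).1 (congrArg Subtype.val h))).symm
    have hsub : (J.erase c).image (fun v => s(c, v)) ⊆ (Set.toFinite R.edgeSet).toFinset := by
      intro e he
      rw [Finset.mem_image] at he
      obtain ⟨v, hv, rfl⟩ := he
      rw [Set.Finite.mem_toFinset, SimpleGraph.Subgraph.mem_edgeSet]
      exact hadjall v hv
    calc ∑ v ∈ J.erase c, f v
        = ∑ e ∈ (J.erase c).image (fun v => s(c, v)), starW f e := by
          rw [Finset.sum_image (sym2_inj_on_erase c J)]
          exact Finset.sum_congr rfl fun v _ => by rw [starW_mk, hf0, zero_add]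
      _ ≤ ∑ e ∈ (Set.toFinite R.edgeSet).toFinset, starW f e :=
          Finset.sum_le_sum_of_subset_of_nonneg hsub (fun e _ _ => starW_nonneg f hf e)
      _ = subgraphWeight (starW f) R := rfl

end StarAux

/-- Theorem 3.2(a), sufficiency: a family of positive reals satisfying the
inequalities, with at most one equality, is realized by a positive-weighted
tree with at least `n` vertices `1,…,n`. -/
theorem tree_vertices_exists {n : ℕ} (hn : 3 ≤ n) (D : Fin n → ℝ)
    (hD : ∀ i, 0 < D i)
    (hineq : ∀ i : Fin n, ((n : ℝ) - 2) * D i ≤ ∑ j ∈ Finset.univ.erase i, D j)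
    (huniq : ∀ i i' : Fin n,
      ((n : ℝ) - 2) * D i = ∑ j ∈ Finset.univ.erase i, D j →
      ((n : ℝ) - 2) * D i' = ∑ j ∈ Finset.univ.erase i', D j → i = i') :
    ∃ (V : Type) (inst : Fintype V) (T : SimpleGraph V) (w : Sym2 V → ℝ)
      (ι : Fin n → V), T.IsTree ∧ PosWeighted T w ∧ Function.Injective ι ∧
      n ≤ @Fintype.card V inst ∧
      ∀ i : Fin n, @graphDist V inst T w (ι '' {j | j ≠ i}) = D i :=  by
  have hn3 : (3 : ℝ) ≤ (n : ℝ) := by exact_mod_cast hn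
  have hn1 : (0 : ℝ) < (n : ℝ) - 1 := by linarith
  set S : ℝ := ∑ j, D j with hS
  set cS : ℝ := S / ((n : ℝ) - 1) with hcS
  have hcS' : ((n : ℝ) - 1) * cS = S := by
    rw [hcS]; field_simp
  have hsum_erase : ∀ i : Fin n, ∑ j ∈ Finset.univ.erase i, D j = S - D i := by
    intro i
    have := Finset.sum_erase_add Finset.univ D (Finset.mem_univ i)
    linarith
  have hineq' : ∀ i : Fin n, ((n : ℝ) - 2) * D i ≤ S - D i := by
    intro i; have := hineq i; rwa [hsum_erase i] at this
  by_cases hE : ∃ i0 : Fin n, ((n : ℝ) - 2) * D i0 = ∑ j ∈ Finset.univ.erase i0, D j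
  · -- an equality holds at i0 : use the star with center i0 on Fin n
    obtain ⟨i0, heq⟩ := hE
    have heq' : ((n : ℝ) - 2) * D i0 = S - D i0 := by rwa [hsum_erase i0] at heq
    set f : Fin n → ℝ := fun j => cS - D j with hf
    have hfi0 : f i0 = 0 := by
      have : S = ((n : ℝ) - 1) * D i0 := by linarith
      rw [hf]; simp only [hcS, this]
      field_simp
      ring
    have hstrict : ∀ j : Fin n, j ≠ i0 → ((n : ℝ) - 2) * D j < S - D j := by
      intro j hj
      rcases lt_or_eq_of_le (hineq' j) with h | h
      · exact h
      · exact absurd (huniq j i0 (by rw [hsum_erase j]; exact h) heq) hj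
    have hfpos : ∀ j : Fin n, j ≠ i0 → 0 < f j := by
      intro j hj
      have h := hstrict j hj
      have : D j < cS := by
        rw [hcS, lt_div_iff₀ hn1]; nlinarith
      simpa [hf] using sub_pos.mpr this
    have hfnn : ∀ j : Fin n, 0 ≤ f j := by
      intro j
      rcases eq_or_ne j i0 with rfl | hj
      · exact le_of_eq hfi0.symm
      · exact le_of_lt (hfpos j hj)
    have htotal : ∑ j, f j = cS := by
      have : ∑ j, f j = (n : ℝ) * cS - S := by
        rw [hf]; rw [Finset.sum_sub_distrib, Finset.sum_const, Finset.card_univ,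
          Fintype.card_fin, nsmul_eq_mul, hS]
      rw [this]; linarith
    refine ⟨Fin n, inferInstance, starG i0, starW f, id, starG_isTree i0, ?_, fun a b h => h,
      by simp, ?_⟩
    · intro e he
      induction e using Sym2.ind with
      | _ a b =>
        rw [SimpleGraph.mem_edgeSet] at he
        obtain ⟨hab, h | h⟩ := he
        · subst h
          rw [starW_mk, hfi0, zero_add]
          exact hfpos b (fun hb => hab hb.symm)
        · subst h
          rw [starW_mk, hfi0, add_zero]
          exact hfpos a hab
    · intro i
      have hIs : (id '' {j : Fin n | j ≠ i}) = ↑(Finset.univ.erase i) := by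
        ext x; simp
      rw [hIs, star_graphDist i0 f hfi0 hfnn (Finset.univ.erase i) ?side]
      case side =>
        rcases eq_or_ne i i0 with rfl | hi
        · right
          rw [Finset.erase_idem, Finset.card_erase_of_mem (Finset.mem_univ i),
            Finset.card_univ, Fintype.card_fin]
          omega
        · exact Or.inl (Finset.mem_erase.mpr ⟨Ne.symm hi, Finset.mem_univ i0⟩)
      have hsum2 : ∑ v ∈ (Finset.univ.erase i).erase i0, f v = (∑ j, f j) - f i := by
        rw [Finset.sum_erase _ hfi0]
        have := Finset.sum_erase_add Finset.univ f (Finset.mem_univ i)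
        linarith
      rw [hsum2, htotal, hf]
      simp
  · -- all inequalities are strict : use the star with an extra center vertex
    push_neg at hE
    have hstrict : ∀ j : Fin n, ((n : ℝ) - 2) * D j < S - D j := by
      intro j
      rcases lt_or_eq_of_le (hineq' j) with h | h
      · exact h
      · exact absurd (by rw [hsum_erase j]; exact h) (hE j)
    set f : Option (Fin n) → ℝ := fun v => v.elim 0 (fun j => cS - D j) with hf
    have hfnone : f none = 0 := rfl
    have hfpos : ∀ j : Fin n, 0 < f (some j) := by
      intro j
      have h := hstrict j
      have : D j < cS := by
        rw [hcS, lt_div_iff₀ hn1]; nlinarith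
      simpa [hf] using sub_pos.mpr this
    have hfnn : ∀ v, 0 ≤ f v := by
      rintro (_ | j)
      · exact le_of_eq rfl
      · exact le_of_lt (hfpos j)
    refine ⟨Option (Fin n), inferInstance, starG none, starW f, some, starG_isTree none, ?_,
      fun a b h => Option.some_injective _ h, by simp, ?_⟩
    · intro e he
      induction e using Sym2.ind with
      | _ a b =>
        rw [SimpleGraph.mem_edgeSet] at he
        obtain ⟨hab, h | h⟩ := he
        · subst h
          obtain ⟨j, rfl⟩ : ∃ j, b = some j :=
            Option.ne_none_iff_exists'.mp (fun hb => hab hb.symm)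
          rw [starW_mk, hfnone, zero_add]
          exact hfpos j
        · subst h
          obtain ⟨j, rfl⟩ : ∃ j, a = some j := Option.ne_none_iff_exists'.mp hab
          rw [starW_mk, hfnone, add_zero]
          exact hfpos j
    · intro i
      set J : Finset (Option (Fin n)) := (Finset.univ.erase i).image some with hJ
      have hIs : (some '' {j : Fin n | j ≠ i}) = ↑J := by
        rw [hJ, Finset.coe_image, Finset.coe_erase]
        ext x
        cases x <;> simp
      have hnone : none ∉ J := by
        rw [hJ]; simp
      have hJe : J.erase none = J := Finset.erase_eq_of_notMem hnone
      have hcard : 2 ≤ (J.erase none).card := by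
        rw [hJe, hJ, Finset.card_image_of_injective _ (Option.some_injective _),
          Finset.card_erase_of_mem (Finset.mem_univ i), Finset.card_univ, Fintype.card_fin]
        omega
      rw [hIs, star_graphDist none f hfnone hfnn J (Or.inr hcard), hJe, hJ,
        Finset.sum_image (fun x _ y _ h => Option.some_injective _ h)]
      have h1 : ∑ j ∈ Finset.univ.erase i, f (some j)
          = ((n : ℝ) - 1) * cS - (S - D i) := by
        have hc : ∑ j ∈ Finset.univ.erase i, (cS : ℝ) = ((n : ℝ) - 1) * cS := by
          rw [Finset.sum_const, Finset.card_erase_of_mem (Finset.mem_univ i),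
            Finset.card_univ, Fintype.card_fin, nsmul_eq_mul]
          have : ((n - 1 : ℕ) : ℝ) = (n : ℝ) - 1 := by
            have : 1 ≤ n := by omega
            push_cast [this]; ring
          rw [this]
        have hd := hsum_erase i
        calc ∑ j ∈ Finset.univ.erase i, f (some j)
            = ∑ j ∈ Finset.univ.erase i, (cS - D j) := rfl
          _ = (∑ j ∈ Finset.univ.erase i, (cS : ℝ)) - ∑ j ∈ Finset.univ.erase i, D j := by
              rw [Finset.sum_sub_distrib]
          _ = ((n : ℝ) - 1) * cS - (S - D i) := by rw [hc, hd]
      rw [h1, hcS']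
      ring
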